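/- Let α, γ, δ₁, β₁ ∈ ℂ with γ ≠ 0. Let x₀ ∈ ℂ ∖ {0}, let D′ be a punctured open disk centered at x₀, and let y, z : D′ → ℂ be holomorphic with y nowhere zero, satisfying the P_III system y′ = y²z/2 + δ₁ − y/x and z′ = −y z²/2 + 2γ y + (2/x)(α + β₁/y²) on D′. Suppose z extends holomorphically to x₀ and y has a simple pole at x₀ (so that z(x₀)² = 4γ). Then the function x ↦ E(y(x), z(x)) = y(x)²z(x)²/4 + δ₁ z(x) − γ y(x)² extends meromorphically to x₀ with a pole of order at most 1, and lim_{x → x₀} (x − x₀)·E(y(x), z(x)) = −4α/(x₀ · z(x₀)). -/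

import Mathlib

open Metric Filter Topology

lemma deriv_eventuallyEq_punctured {f g : ℂ → ℂ} {x₀ : ℂ} (h : f =ᶠ[𝓝[≠] x₀] g) :
    deriv f =ᶠ[𝓝[≠] x₀] deriv g := by
  obtain ⟨U, hUo, hxU, hU⟩ := mem_nhdsWithin.mp h
  refine mem_nhdsWithin.mpr ⟨U, hUo, hxU, fun x hx => ?_⟩
  have hev : f =ᶠ[𝓝 x] g :=
    eventually_of_mem ((hUo.inter isOpen_compl_singleton).mem_nhds hx)
      (fun y hy => hU ⟨hy.1, hy.2⟩)
  exact hev.deriv_eq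


set_option maxHeartbeats 1600000 in
/-- At a movable simple pole `x₀` of `y` (with `z` extending
holomorphically to `x₀`), the energy `E(y, z) = y²z²/4 + δ₁z − γy²` extends
meromorphically to `x₀` with a pole of order at most `1`, and
`lim (x − x₀)·E = −4α/(x₀·z(x₀))`. -/
theorem energy_simple_pole_at_movable_pole (α γ δ₁ β₁ : ℂ) (hγ : γ ≠ 0)
    (x₀ : ℂ) (hx₀ : x₀ ≠ 0) (r : ℝ) (hr : 0 < r)
    (y z : ℂ → ℂ)
    (hy : DifferentiableOn ℂ y (ball x₀ r \ {x₀}))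
    (hz : DifferentiableOn ℂ z (ball x₀ r \ {x₀}))
    (hy0 : ∀ x ∈ ball x₀ r \ {x₀}, y x ≠ 0)
    (hsys1 : ∀ x ∈ ball x₀ r \ {x₀},
      deriv y x = (y x) ^ 2 * z x / 2 + δ₁ - y x / x)
    (hsys2 : ∀ x ∈ ball x₀ r \ {x₀},
      deriv z x = -(y x * (z x) ^ 2) / 2 + 2 * γ * y x
        + (2 / x) * (α + β₁ / (y x) ^ 2))
    (Z : ℂ → ℂ) (hZ : DifferentiableOn ℂ Z (ball x₀ r))
    (hZz : ∀ x ∈ ball x₀ r \ {x₀}, Z x = z x)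
    (hy_mer : MeromorphicAt y x₀)
    (hy_pole : meromorphicOrderAt y x₀ = ((-1 : ℤ) : WithTop ℤ)) :
    MeromorphicAt (fun x => (y x) ^ 2 * (z x) ^ 2 / 4 + δ₁ * z x - γ * (y x) ^ 2) x₀ ∧
    Tendsto
      (fun x => (x - x₀) * ((y x) ^ 2 * (z x) ^ 2 / 4 + δ₁ * z x - γ * (y x) ^ 2))
      (𝓝[≠] x₀) (𝓝 (-4 * α / (x₀ * Z x₀))) := by
  -- membership of the punctured ball in the punctured neighborhood filter
  have hball : ball x₀ r \ {x₀} ∈ 𝓝[≠] x₀ :=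
    mem_nhdsWithin.mpr ⟨ball x₀ r, isOpen_ball, mem_ball_self hr, fun x hx => ⟨hx.1, hx.2⟩⟩
  -- the leading coefficient function g
  obtain ⟨g, hg_an, hgc, hyg'⟩ := (meromorphicOrderAt_eq_int_iff hy_mer).mp hy_pole
  have hne : ∀ᶠ x in 𝓝[≠] x₀, x ≠ x₀ := self_mem_nhdsWithin
  have hyg : ∀ᶠ x in 𝓝[≠] x₀, y x = g x / (x - x₀) := by
    filter_upwards [hyg', hne] with x hx hxne
    rw [hx, zpow_neg_one, smul_eq_mul, inv_mul_eq_div]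
  -- continuity facts
  have cg : ContinuousAt g x₀ := hg_an.continuousAt
  have cg' : ContinuousAt (deriv g) x₀ := by
    obtain ⟨v, vx, hv⟩ := hg_an.exists_mem_nhds_analyticOnNhd
    exact ((hv.deriv) x₀ (mem_of_mem_nhds vx)).continuousAt
  have hZO : AnalyticOnNhd ℂ Z (ball x₀ r) := hZ.analyticOnNhd isOpen_ball
  have hZan : AnalyticAt ℂ Z x₀ := hZO x₀ (mem_ball_self hr)
  have cZ : ContinuousAt Z x₀ := hZan.continuousAt
  have cZ' : ContinuousAt (deriv Z) x₀ := ((hZO.deriv) x₀ (mem_ball_self hr)).continuousAt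
  have hzZ : z =ᶠ[𝓝[≠] x₀] Z := by
    filter_upwards [hball] with x hx; exact (hZz x hx).symm
  have hx0 : ∀ᶠ x in 𝓝[≠] x₀, x ≠ 0 :=
    (eventually_ne_nhds hx₀).filter_mono nhdsWithin_le_nhds
  have hgne : ∀ᶠ x in 𝓝[≠] x₀, g x ≠ 0 :=
    (cg.eventually_ne hgc).filter_mono nhdsWithin_le_nhds
  -- derivative formulas
  have hdy0 : deriv y =ᶠ[𝓝[≠] x₀] deriv (fun x => g x / (x - x₀)) :=
    deriv_eventuallyEq_punctured hyg
  have hdy : ∀ᶠ x in 𝓝[≠] x₀,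
      deriv y x = (deriv g x * (x - x₀) - g x) / (x - x₀) ^ 2 := by
    filter_upwards [hdy0, hne,
      hg_an.eventually_analyticAt.filter_mono nhdsWithin_le_nhds] with x h1 h2 h3
    have hdd : HasDerivAt (fun y => y - x₀) 1 x := by
      simpa using (hasDerivAt_id x).sub_const x₀
    rw [h1, show (fun x => g x / (x - x₀)) = g / (fun y => y - x₀) from rfl,
      ((h3.differentiableAt.hasDerivAt).div hdd (sub_ne_zero.mpr h2)).deriv]
    ring
  have hdz : deriv z =ᶠ[𝓝[≠] x₀] deriv Z := deriv_eventuallyEq_punctured hzZ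
  -- limit computations for equation 1
  have T1 : Tendsto (fun x => (x - x₀) ^ 2 * deriv y x) (𝓝[≠] x₀) (𝓝 (-(g x₀))) := by
    have base : Tendsto (fun x => deriv g x * (x - x₀) - g x) (𝓝 x₀)
        (𝓝 (deriv g x₀ * (x₀ - x₀) - g x₀)) :=
      (cg'.tendsto.mul (tendsto_id.sub tendsto_const_nhds)).sub cg.tendsto
    rw [sub_self, mul_zero, zero_sub] at base
    refine Tendsto.congr' ?_ (base.mono_left nhdsWithin_le_nhds)
    filter_upwards [hdy, hne] with x h1 h2
    rw [h1]
    field_simp [sub_ne_zero.mpr h2]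
  have T1' : Tendsto (fun x => (x - x₀) ^ 2 * deriv y x) (𝓝[≠] x₀)
      (𝓝 ((g x₀) ^ 2 * Z x₀ / 2)) := by
    have cont : ContinuousAt (fun x => (g x) ^ 2 * Z x / 2 + (x - x₀) ^ 2 * δ₁
        - (x - x₀) * g x / x) x₀ := by
      exact ((((cg.pow 2).mul cZ).div continuousAt_const (by norm_num)).add
        ((((continuousAt_id.sub continuousAt_const).pow 2)).mul continuousAt_const)).sub
        (((continuousAt_id.sub continuousAt_const).mul cg).div continuousAt_id hx₀)
    have base := cont.tendsto.mono_left (nhdsWithin_le_nhds : 𝓝[≠] x₀ ≤ 𝓝 x₀)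
    simp only [sub_self, mul_zero, zero_mul, zero_div, add_zero, sub_zero,
      ne_eq, OfNat.ofNat_ne_zero, not_false_eq_true, zero_pow] at base
    refine Tendsto.congr' ?_ base
    filter_upwards [hyg, hzZ, hne, hx0, hball] with x h1 h2 h3 h4 hx
    rw [hsys1 x hx, h1, h2]
    field_simp [sub_ne_zero.mpr h3]
  have key1 : g x₀ * Z x₀ = -2 := by
    have huniq := tendsto_nhds_unique T1 T1'
    have h2 : g x₀ * (g x₀ * Z x₀ + 2) = 0 := by linear_combination -2 * huniq
    rcases mul_eq_zero.mp h2 with h | h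
    · exact absurd h hgc
    · linear_combination h
  have hZ₀ : Z x₀ ≠ 0 := by
    intro h
    rw [h, mul_zero] at key1
    exact absurd key1 (by norm_num)
  -- limit computations for equation 2
  have T2 : Tendsto (fun x => (x - x₀) * deriv z x) (𝓝[≠] x₀) (𝓝 0) := by
    have base : Tendsto (fun x => (x - x₀) * deriv Z x) (𝓝 x₀)
        (𝓝 ((x₀ - x₀) * deriv Z x₀)) :=
      ((continuousAt_id.sub continuousAt_const).mul cZ').tendsto
    rw [sub_self, zero_mul] at base
    refine Tendsto.congr' ?_ (base.mono_left nhdsWithin_le_nhds)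
    filter_upwards [hdz] with x h1
    rw [h1]
  have T2' : Tendsto (fun x => (x - x₀) * deriv z x) (𝓝[≠] x₀)
      (𝓝 (-(g x₀ * (Z x₀) ^ 2) / 2 + 2 * γ * g x₀)) := by
    have cont : ContinuousAt (fun x => -(g x * (Z x) ^ 2) / 2 + 2 * γ * g x
        + (x - x₀) * ((2 / x) * (α + β₁ * (x - x₀) ^ 2 / (g x) ^ 2))) x₀ := by
      exact ((((cg.mul (cZ.pow 2)).neg).div continuousAt_const (by norm_num)).add
        (continuousAt_const.mul cg)).add
        ((continuousAt_id.sub continuousAt_const).mul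
          ((continuousAt_const.div continuousAt_id hx₀).mul
            (continuousAt_const.add ((continuousAt_const.mul
              ((continuousAt_id.sub continuousAt_const).pow 2)).div (cg.pow 2)
              (pow_ne_zero 2 hgc)))))
    have base := cont.tendsto.mono_left (nhdsWithin_le_nhds : 𝓝[≠] x₀ ≤ 𝓝 x₀)
    simp only [sub_self, zero_mul, add_zero] at base
    refine Tendsto.congr' ?_ base
    filter_upwards [hyg, hzZ, hne, hx0, hgne, hball] with x h1 h2 h3 h4 h5 hx
    rw [hsys2 x hx, h1, h2]
    field_simp [sub_ne_zero.mpr h3]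
  have key2 : (Z x₀) ^ 2 = 4 * γ := by
    have huniq := tendsto_nhds_unique T2 T2'
    have h2 : g x₀ * (4 * γ - (Z x₀) ^ 2) = 0 := by linear_combination -2 * huniq
    rcases mul_eq_zero.mp h2 with h | h
    · exact absurd h hgc
    · linear_combination -h
  -- slope limit
  have slope_t : Tendsto (fun x => (Z x - Z x₀) / (x - x₀)) (𝓝[≠] x₀)
      (𝓝 (deriv Z x₀)) := by
    have := hasDerivAt_iff_tendsto_slope.mp hZan.differentiableAt.hasDerivAt
    exact this.congr (fun x => by rw [slope_def_field])
  -- limit computations for equation 2 revisited (value of Z' at x₀)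
  have T3 : Tendsto (deriv z) (𝓝[≠] x₀) (𝓝 (deriv Z x₀)) :=
    Tendsto.congr' hdz.symm (cZ'.tendsto.mono_left nhdsWithin_le_nhds)
  have T3' : Tendsto (deriv z) (𝓝[≠] x₀)
      (𝓝 (2 * deriv Z x₀ + 2 * α / x₀)) := by
    have contA : ContinuousAt (fun x => -(g x * (Z x + Z x₀)) / 2) x₀ :=
      ((cg.mul (cZ.add continuousAt_const)).neg).div continuousAt_const (by norm_num)
    have contB : ContinuousAt (fun x => (2 / x) * (α + β₁ * (x - x₀) ^ 2 / (g x) ^ 2)) x₀ :=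
      (continuousAt_const.div continuousAt_id hx₀).mul
        (continuousAt_const.add ((continuousAt_const.mul
          ((continuousAt_id.sub continuousAt_const).pow 2)).div (cg.pow 2)
          (pow_ne_zero 2 hgc)))
    have base : Tendsto (fun x => (-(g x * (Z x + Z x₀)) / 2) * ((Z x - Z x₀) / (x - x₀))
        + (2 / x) * (α + β₁ * (x - x₀) ^ 2 / (g x) ^ 2)) (𝓝[≠] x₀)
        (𝓝 ((-(g x₀ * (Z x₀ + Z x₀)) / 2) * deriv Z x₀
          + (2 / x₀) * (α + β₁ * (x₀ - x₀) ^ 2 / (g x₀) ^ 2))) :=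
      ((contA.tendsto.mono_left nhdsWithin_le_nhds).mul slope_t).add
        (contB.tendsto.mono_left nhdsWithin_le_nhds)
    have hval : (-(g x₀ * (Z x₀ + Z x₀)) / 2) * deriv Z x₀
        + (2 / x₀) * (α + β₁ * (x₀ - x₀) ^ 2 / (g x₀) ^ 2)
        = 2 * deriv Z x₀ + 2 * α / x₀ := by
      have hc : g x₀ = -2 / Z x₀ := by
        field_simp
        linear_combination key1
      rw [hc]
      simp only [sub_self, ne_eq, OfNat.ofNat_ne_zero, not_false_eq_true, zero_pow,
        zero_div, mul_zero, add_zero]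
      field_simp
      ring
    rw [hval] at base
    refine Tendsto.congr' ?_ base
    filter_upwards [hyg, hzZ, hne, hx0, hgne, hball] with x h1 h2 h3 h4 h5 hx
    rw [hsys2 x hx, h1, h2]
    have hγeq : γ = (Z x₀) ^ 2 / 4 := by linear_combination -key2 / 4
    rw [hγeq]
    field_simp [sub_ne_zero.mpr h3]
    ring
  have key3 : deriv Z x₀ = -2 * α / x₀ := by
    have huniq := tendsto_nhds_unique T3 T3'
    rw [eq_div_iff hx₀]
    field_simp at huniq
    linear_combination -huniq
  -- meromorphy of z and of the energy
  have hz_mer : MeromorphicAt z x₀ := hZan.meromorphicAt.congr (hzZ.symm)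
  refine ⟨?_, ?_⟩
  · exact ((((hy_mer.pow 2).mul (hz_mer.pow 2)).div (MeromorphicAt.const 4 x₀)).add
      ((MeromorphicAt.const δ₁ x₀).mul hz_mer)).sub
      ((MeromorphicAt.const γ x₀).mul (hy_mer.pow 2))
  -- the limit
  · have contA : ContinuousAt (fun x => (g x) ^ 2 * (Z x + Z x₀) / 4) x₀ :=
      (((cg.pow 2).mul (cZ.add continuousAt_const)).div continuousAt_const (by norm_num))
    have contB : ContinuousAt (fun x => (x - x₀) * (δ₁ * Z x)) x₀ :=
      (continuousAt_id.sub continuousAt_const).mul (continuousAt_const.mul cZ)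
    have base : Tendsto (fun x => ((g x) ^ 2 * (Z x + Z x₀) / 4) * ((Z x - Z x₀) / (x - x₀))
        + (x - x₀) * (δ₁ * Z x)) (𝓝[≠] x₀)
        (𝓝 (((g x₀) ^ 2 * (Z x₀ + Z x₀) / 4) * deriv Z x₀ + (x₀ - x₀) * (δ₁ * Z x₀))) :=
      ((contA.tendsto.mono_left nhdsWithin_le_nhds).mul slope_t).add
        (contB.tendsto.mono_left nhdsWithin_le_nhds)
    have hval : ((g x₀) ^ 2 * (Z x₀ + Z x₀) / 4) * deriv Z x₀ + (x₀ - x₀) * (δ₁ * Z x₀)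
        = -4 * α / (x₀ * Z x₀) := by
      have hc : g x₀ = -2 / Z x₀ := by
        field_simp
        linear_combination key1
      rw [hc, key3]
      field_simp
      ring
    rw [hval] at base
    refine Tendsto.congr' ?_ base
    filter_upwards [hyg, hzZ, hne, hx0, hgne] with x h1 h2 h3 h4 h5
    rw [h1, h2]
    have hγeq : γ = (Z x₀) ^ 2 / 4 := by linear_combination -key2 / 4
    rw [hγeq]
    field_simp [sub_ne_zero.mpr h3]
    ring
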